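/- For λ > 0, t > s ≥ 0 and real x, the integral ∫_s^t (r−s)·p(r−s, x, λ(r−s)) dr equals (1/λ³)·exp(−λα(x))·Φ(λ√(t−s) − |x|/√(t−s)) − (1/λ³)·exp(λγ(x))·Φ(−λ√(t−s) − |x|/√(t−s)) + (|x|/λ²)·exp(−λα(x))·Φ(λ√(t−s) − |x|/√(t−s)) + (|x|/λ²)·exp(λγ(x))·Φ(−λ√(t−s) − |x|/√(t−s)) − (2/λ²)·(t−s)·p(t−s, x, λ(t−s)). -/

import Mathlib

open MeasureTheory Real intervalIntegral

/-- Gaussian density with variance `t` and mean `m`, evaluated at `x`. -/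
noncomputable def gaussDensity (t x m : ℝ) : ℝ :=
  Real.exp (-(x - m) ^ 2 / (2 * t)) / Real.sqrt (2 * Real.pi * t)

/-- Standard normal cumulative distribution function. -/
noncomputable def Phi (x : ℝ) : ℝ :=
  ∫ u in Set.Iic x, Real.exp (-u ^ 2 / 2) / Real.sqrt (2 * Real.pi)

/-- `α(x) = |x| − x`. -/
noncomputable def alphaFn (x : ℝ) : ℝ := |x| - x

/-- `γ(x) = |x| + x`. -/
noncomputable def gammaFn (x : ℝ) : ℝ := |x| + x

open Filter

section PhiLemmas

lemma cont_g : Continuous (fun u : ℝ => Real.exp (-u ^ 2 / 2) / Real.sqrt (2 * Real.pi)) := by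
  exact (Real.continuous_exp.comp (by continuity)).div_const _

lemma integrable_g : Integrable (fun u : ℝ => Real.exp (-u ^ 2 / 2) / Real.sqrt (2 * Real.pi)) := by
  have h := (integrable_exp_neg_mul_sq (by norm_num : (0:ℝ) < 1/2)).div_const
      (Real.sqrt (2 * Real.pi))
  convert h using 3 with u
  ring

lemma g_nonneg (u : ℝ) : 0 ≤ Real.exp (-u ^ 2 / 2) / Real.sqrt (2 * Real.pi) := by positivity

lemma hasDerivAt_Phi (y : ℝ) :
    HasDerivAt Phi (Real.exp (-y ^ 2 / 2) / Real.sqrt (2 * Real.pi)) y := by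
  have heq : Phi = fun z => Phi 0 + ∫ w in (0:ℝ)..z,
      Real.exp (-w ^ 2 / 2) / Real.sqrt (2 * Real.pi) := by
    funext z
    have := intervalIntegral.integral_Iic_sub_Iic (μ := volume)
      (f := fun u : ℝ => Real.exp (-u ^ 2 / 2) / Real.sqrt (2 * Real.pi))
      integrable_g.integrableOn integrable_g.integrableOn (a := 0) (b := z)
    simp only [Phi]
    beta_reduce at this
    linarith
  rw [heq]
  exact ((intervalIntegral.integral_hasDerivAt_right
    integrable_g.intervalIntegrable
    cont_g.stronglyMeasurable.stronglyMeasurableAtFilter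
    cont_g.continuousAt)).const_add _

lemma Phi_nonneg (y : ℝ) : 0 ≤ Phi y :=
  setIntegral_nonneg measurableSet_Iic fun u _ => g_nonneg u

lemma Phi_mono : Monotone Phi := fun _ _ hab =>
  setIntegral_mono_set integrable_g.integrableOn
    (Filter.Eventually.of_forall fun u => g_nonneg u)
    (HasSubset.Subset.eventuallyLE (Set.Iic_subset_Iic.2 hab))

lemma tendsto_Phi_atBot : Tendsto Phi atBot (nhds 0) := by
  have key : Tendsto (fun n : ℕ => Phi (-(n:ℝ))) atTop (nhds 0) := by
    have hanti : Antitone fun n : ℕ => Set.Iic (-(n:ℝ)) := by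
      intro m n hmn
      exact Set.Iic_subset_Iic.2 (by exact_mod_cast neg_le_neg (by exact_mod_cast hmn))
    have h := Antitone.tendsto_setIntegral (μ := volume)
      (s := fun n : ℕ => Set.Iic (-(n:ℝ)))
      (f := fun u : ℝ => Real.exp (-u ^ 2 / 2) / Real.sqrt (2 * Real.pi))
      (fun _ => measurableSet_Iic) hanti integrable_g.integrableOn
    have hempty : (⋂ n : ℕ, Set.Iic (-(n:ℝ))) = ∅ := by
      ext z
      simp only [Set.mem_iInter, Set.mem_Iic, Set.mem_empty_iff_false, iff_false, not_forall,
        not_le]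
      obtain ⟨n, hn⟩ := exists_nat_gt (-z)
      exact ⟨n, by linarith⟩
    rw [hempty] at h
    simpa [Phi] using h
  rw [NormedAddCommGroup.tendsto_nhds_zero]
  intro ε hε
  obtain ⟨n, hn⟩ := (key.eventually_lt_const hε).exists
  filter_upwards [eventually_le_atBot (-(n:ℝ))] with y hy
  rw [Real.norm_eq_abs, abs_of_nonneg (Phi_nonneg y)]
  exact lt_of_le_of_lt (Phi_mono hy) hn

end PhiLemmas

/-- The antiderivative appearing in `stmt_8`. -/
noncomputable def Fa (lam x u : ℝ) : ℝ :=
  (1 / lam ^ 3 + |x| / lam ^ 2) * Real.exp (-lam * alphaFn x) *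
      Phi (lam * Real.sqrt u - |x| / Real.sqrt u)
    + (|x| / lam ^ 2 - 1 / lam ^ 3) * Real.exp (lam * gammaFn x) *
      Phi (-(lam * Real.sqrt u) - |x| / Real.sqrt u)
    - 2 / lam ^ 2 * (u * gaussDensity u x (lam * u))

lemma hasDerivAt_Fa (lam x : ℝ) (hlam : 0 < lam) {u : ℝ} (hu : 0 < u) :
    HasDerivAt (Fa lam x) (u * gaussDensity u x (lam * u)) u := by
  have hq : 0 < Real.sqrt u := Real.sqrt_pos.2 hu
  have hq2 : Real.sqrt u ^ 2 = u := Real.sq_sqrt hu.le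
  have hsqrt : HasDerivAt Real.sqrt (1 / (2 * Real.sqrt u)) u := Real.hasDerivAt_sqrt hu.ne'
  have hA : HasDerivAt (fun v => lam * Real.sqrt v - |x| / Real.sqrt v)
      (lam * (1 / (2 * Real.sqrt u)) -
        (0 * Real.sqrt u - |x| * (1 / (2 * Real.sqrt u))) / Real.sqrt u ^ 2) u :=
    (hsqrt.const_mul lam).sub ((hasDerivAt_const u |x|).div hsqrt hq.ne')
  have hB : HasDerivAt (fun v => -(lam * Real.sqrt v) - |x| / Real.sqrt v)
      (-(lam * (1 / (2 * Real.sqrt u))) -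
        (0 * Real.sqrt u - |x| * (1 / (2 * Real.sqrt u))) / Real.sqrt u ^ 2) u :=
    ((hsqrt.const_mul lam).neg).sub ((hasDerivAt_const u |x|).div hsqrt hq.ne')
  have hPA := (hasDerivAt_Phi (lam * Real.sqrt u - |x| / Real.sqrt u)).comp u hA
  have hPB := (hasDerivAt_Phi (-(lam * Real.sqrt u) - |x| / Real.sqrt u)).comp u hB
  have hlin : HasDerivAt (fun v : ℝ => x - lam * v) (0 - lam * 1) u :=
    (hasDerivAt_const u x).sub ((hasDerivAt_id u).const_mul lam)
  have hnum_in : HasDerivAt (fun v : ℝ => -(x - lam * v) ^ 2 / (2 * v))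
      ((-(2 * (x - lam * u) ^ 1 * (0 - lam * 1)) * (2 * u) - -(x - lam * u) ^ 2 * (2 * 1)) /
        (2 * u) ^ 2) u :=
    ((hlin.pow 2).neg).div ((hasDerivAt_id u).const_mul 2) (by positivity)
  have hnum := hnum_in.exp
  have hden : HasDerivAt (fun v : ℝ => Real.sqrt (2 * Real.pi * v))
      (1 / (2 * Real.sqrt (2 * Real.pi * u)) * (2 * Real.pi * 1)) u :=
    (Real.hasDerivAt_sqrt (by positivity)).comp u ((hasDerivAt_id u).const_mul (2 * Real.pi))
  have hgauss := hnum.div hden (by positivity)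
  have hfull := (hasDerivAt_id u).mul hgauss
  have hFa := ((hPA.const_mul ((1 / lam ^ 3 + |x| / lam ^ 2) * Real.exp (-lam * alphaFn x))).add
      (hPB.const_mul ((|x| / lam ^ 2 - 1 / lam ^ 3) * Real.exp (lam * gammaFn x)))).sub
      (hfull.const_mul (2 / lam ^ 2))
  have hFa' : HasDerivAt (Fa lam x) _ u := hFa
  convert hFa' using 1
  clear hFa hFa' hfull hgauss hden hnum hnum_in hlin hPB hPA hB hA hsqrt
  simp only [id_eq, alphaFn, gammaFn, gaussDensity, Pi.div_apply]
  rcases abs_cases x with ⟨habs, _⟩ | ⟨habs, _⟩ <;> rw [habs]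
  · set q := Real.sqrt u with hqdef
    rw [← hq2]
    have hsq : Real.sqrt (2 * Real.pi * q ^ 2) = Real.sqrt (2 * Real.pi) * q := by
      rw [Real.sqrt_mul (by positivity), Real.sqrt_sq hq.le]
    rw [hsq]
    set s := Real.sqrt (2 * Real.pi) with hsdef
    have hs : 0 < s := Real.sqrt_pos.2 (by positivity)
    have hs2 : s ^ 2 = 2 * Real.pi := Real.sq_sqrt (by positivity)
    have hpi : Real.pi = s ^ 2 / 2 := by rw [hs2]; ring
    rw [hpi]
    have hexp1 : Real.exp (-(lam * q - x / q) ^ 2 / 2) =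
        Real.exp (-(x - lam * q ^ 2) ^ 2 / (2 * q ^ 2)) / Real.exp (-lam * (x - x)) := by
      rw [eq_div_iff (Real.exp_ne_zero _), ← Real.exp_add]
      congr 1
      field_simp
      ring
    have hexp2 : Real.exp (-(-(lam * q) - x / q) ^ 2 / 2) =
        Real.exp (-(x - lam * q ^ 2) ^ 2 / (2 * q ^ 2)) / Real.exp (lam * (x + x)) := by
      rw [eq_div_iff (Real.exp_ne_zero _), ← Real.exp_add]
      congr 1
      field_simp
      ring
    rw [hexp1, hexp2]
    field_simp
    ring
  · set q := Real.sqrt u with hqdef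
    rw [← hq2]
    have hsq : Real.sqrt (2 * Real.pi * q ^ 2) = Real.sqrt (2 * Real.pi) * q := by
      rw [Real.sqrt_mul (by positivity), Real.sqrt_sq hq.le]
    rw [hsq]
    set s := Real.sqrt (2 * Real.pi) with hsdef
    have hs : 0 < s := Real.sqrt_pos.2 (by positivity)
    have hs2 : s ^ 2 = 2 * Real.pi := Real.sq_sqrt (by positivity)
    have hpi : Real.pi = s ^ 2 / 2 := by rw [hs2]; ring
    rw [hpi]
    have hexp1 : Real.exp (-(lam * q - (-x) / q) ^ 2 / 2) =
        Real.exp (-(x - lam * q ^ 2) ^ 2 / (2 * q ^ 2)) / Real.exp (-lam * ((-x) - x)) := by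
      rw [eq_div_iff (Real.exp_ne_zero _), ← Real.exp_add]
      congr 1
      field_simp
      ring
    have hexp2 : Real.exp (-(-(lam * q) - (-x) / q) ^ 2 / 2) =
        Real.exp (-(x - lam * q ^ 2) ^ 2 / (2 * q ^ 2)) / Real.exp (lam * ((-x) + x)) := by
      rw [eq_div_iff (Real.exp_ne_zero _), ← Real.exp_add]
      congr 1
      field_simp
      ring
    rw [hexp1, hexp2]
    field_simp
    ring

lemma gauss_bound {T u x m : ℝ} (hu : 0 < u) (hT : u ≤ T) :
    ‖u * gaussDensity u x m‖ ≤ Real.sqrt T / Real.sqrt (2 * Real.pi) := by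
  have h1 : 0 ≤ u * gaussDensity u x m := by unfold gaussDensity; positivity
  rw [Real.norm_eq_abs, abs_of_nonneg h1]
  unfold gaussDensity
  have hle1 : Real.exp (-(x - m) ^ 2 / (2 * u)) ≤ 1 := by
    rw [Real.exp_le_one_iff]
    exact div_nonpos_of_nonpos_of_nonneg (neg_nonpos.2 (sq_nonneg _)) (by linarith)
  have hqu : 0 < Real.sqrt u := Real.sqrt_pos.2 hu
  have hs2u : Real.sqrt (2 * Real.pi * u) = Real.sqrt (2 * Real.pi) * Real.sqrt u :=
    Real.sqrt_mul (by positivity) u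
  have hkey : u * ((1:ℝ) / Real.sqrt (2 * Real.pi * u)) =
      Real.sqrt u / Real.sqrt (2 * Real.pi) := by
    have hr := Real.mul_self_sqrt hu.le
    rw [hs2u]
    field_simp
    linear_combination (-1) * hr
  calc u * (Real.exp (-(x - m) ^ 2 / (2 * u)) / Real.sqrt (2 * Real.pi * u))
      ≤ u * (1 / Real.sqrt (2 * Real.pi * u)) := by gcongr
    _ = Real.sqrt u / Real.sqrt (2 * Real.pi) := hkey
    _ ≤ Real.sqrt T / Real.sqrt (2 * Real.pi) := by
        gcongr

lemma intervalIntegrable_main (lam x T : ℝ) (hT : 0 < T) :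
    IntervalIntegrable (fun u => u * gaussDensity u x (lam * u)) volume 0 T := by
  rw [intervalIntegrable_iff_integrableOn_Ioc_of_le hT.le]
  refine Measure.integrableOn_of_bounded (M := Real.sqrt T / Real.sqrt (2 * Real.pi))
    measure_Ioc_lt_top.ne ?_ ?_
  · apply Measurable.aestronglyMeasurable
    unfold gaussDensity
    have f1 : Measurable fun u : ℝ => -(x - lam * u) ^ 2 :=
      ((measurable_const.sub (measurable_id'.const_mul lam)).pow_const 2).neg
    have f2 : Measurable fun u : ℝ => 2 * u := measurable_id'.const_mul 2
    have f3 : Measurable fun u : ℝ => Real.sqrt (2 * Real.pi * u) :=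
      Real.continuous_sqrt.measurable.comp (measurable_id'.const_mul (2 * Real.pi))
    exact measurable_id'.mul (((f1.div f2).exp).div f3)
  · rw [ae_restrict_iff' measurableSet_Ioc]
    exact Filter.Eventually.of_forall fun u hu => gauss_bound hu.1 hu.2

lemma tendsto_sqrt_zero : Filter.Tendsto Real.sqrt (nhdsWithin 0 (Set.Ioi 0)) (nhds 0) :=
  (Real.continuous_sqrt.tendsto' 0 0 Real.sqrt_zero).mono_left nhdsWithin_le_nhds

lemma tendsto_Fa_zero (lam x : ℝ) (hlam : 0 < lam) :
    Filter.Tendsto (Fa lam x) (nhdsWithin 0 (Set.Ioi 0)) (nhds 0) := by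
  have h2 : Filter.Tendsto (fun u => lam * Real.sqrt u) (nhdsWithin 0 (Set.Ioi 0)) (nhds 0) := by
    simpa using (tendsto_sqrt_zero.const_mul lam)
  have h3 : Filter.Tendsto (fun u => 2 / lam ^ 2 * (u * gaussDensity u x (lam * u)))
      (nhdsWithin 0 (Set.Ioi 0)) (nhds 0) := by
    have hb : Filter.Tendsto (fun u : ℝ => 2 / lam ^ 2 * (Real.sqrt u / Real.sqrt (2 * Real.pi)))
        (nhdsWithin 0 (Set.Ioi 0)) (nhds 0) := by
      simpa using ((tendsto_sqrt_zero.div_const (Real.sqrt (2 * Real.pi))).const_mul (2 / lam ^ 2))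
    apply squeeze_zero_norm' _ hb
    filter_upwards [self_mem_nhdsWithin] with u hu
    rw [norm_mul]
    calc ‖2 / lam ^ 2‖ * ‖u * gaussDensity u x (lam * u)‖
        ≤ ‖2 / lam ^ 2‖ * (Real.sqrt u / Real.sqrt (2 * Real.pi)) := by
          gcongr
          exact gauss_bound hu le_rfl
      _ = 2 / lam ^ 2 * (Real.sqrt u / Real.sqrt (2 * Real.pi)) := by
          rw [Real.norm_eq_abs, abs_of_nonneg (by positivity)]
  by_cases hx : x = 0
  · subst hx
    have hP1 : Filter.Tendsto (fun u => Phi (lam * Real.sqrt u - |(0:ℝ)| / Real.sqrt u))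
        (nhdsWithin 0 (Set.Ioi 0)) (nhds (Phi 0)) := by
      apply ((hasDerivAt_Phi 0).continuousAt.tendsto).comp
      simpa using h2
    have hP2 : Filter.Tendsto (fun u => Phi (-(lam * Real.sqrt u) - |(0:ℝ)| / Real.sqrt u))
        (nhdsWithin 0 (Set.Ioi 0)) (nhds (Phi 0)) := by
      apply ((hasDerivAt_Phi 0).continuousAt.tendsto).comp
      simpa using h2.neg
    have htot := ((hP1.const_mul ((1 / lam ^ 3 + |(0:ℝ)| / lam ^ 2) *
        Real.exp (-lam * alphaFn 0))).add
        (hP2.const_mul ((|(0:ℝ)| / lam ^ 2 - 1 / lam ^ 3) * Real.exp (lam * gammaFn 0)))).sub h3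
    have hFa : Fa lam 0 = fun u =>
        (1 / lam ^ 3 + |(0:ℝ)| / lam ^ 2) * Real.exp (-lam * alphaFn 0) *
            Phi (lam * Real.sqrt u - |(0:ℝ)| / Real.sqrt u)
          + (|(0:ℝ)| / lam ^ 2 - 1 / lam ^ 3) * Real.exp (lam * gammaFn 0) *
            Phi (-(lam * Real.sqrt u) - |(0:ℝ)| / Real.sqrt u)
          - 2 / lam ^ 2 * (u * gaussDensity u 0 (lam * u)) := rfl
    rw [hFa]
    convert htot using 2
    simp [alphaFn, gammaFn]
  · have habs : 0 < |x| := abs_pos.2 hx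
    have hinvtop : Filter.Tendsto (fun u => |x| / Real.sqrt u)
        (nhdsWithin 0 (Set.Ioi 0)) Filter.atTop := by
      have hsq : Filter.Tendsto Real.sqrt (nhdsWithin 0 (Set.Ioi 0))
          (nhdsWithin 0 (Set.Ioi 0)) := by
        rw [tendsto_nhdsWithin_iff]
        refine ⟨tendsto_sqrt_zero, ?_⟩
        filter_upwards [self_mem_nhdsWithin] with u hu
        exact Real.sqrt_pos.2 hu
      have := (tendsto_inv_nhdsGT_zero.comp hsq).const_mul_atTop habs
      simpa [Function.comp, div_eq_mul_inv] using this
    have hbot : Filter.Tendsto (fun u => -(|x| / Real.sqrt u))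
        (nhdsWithin 0 (Set.Ioi 0)) Filter.atBot := tendsto_neg_atTop_atBot.comp hinvtop
    have hIA : Filter.Tendsto (fun u => lam * Real.sqrt u - |x| / Real.sqrt u)
        (nhdsWithin 0 (Set.Ioi 0)) Filter.atBot := by
      have hev : ∀ᶠ u in nhdsWithin (0:ℝ) (Set.Ioi 0), lam * Real.sqrt u ≤ lam := by
        filter_upwards [Ioo_mem_nhdsGT_of_mem (Set.left_mem_Ico.2 zero_lt_one)] with u hu
        have h1 : Real.sqrt u ≤ 1 := by
          rw [show (1:ℝ) = Real.sqrt 1 by simp]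
          exact Real.sqrt_le_sqrt hu.2.le
        nlinarith
      have := Filter.tendsto_atBot_add_left_of_ge' _ lam hev hbot
      simpa [sub_eq_add_neg] using this
    have hIB : Filter.Tendsto (fun u => -(lam * Real.sqrt u) - |x| / Real.sqrt u)
        (nhdsWithin 0 (Set.Ioi 0)) Filter.atBot := by
      have hev : ∀ᶠ u in nhdsWithin (0:ℝ) (Set.Ioi 0), -(lam * Real.sqrt u) ≤ 0 := by
        filter_upwards [self_mem_nhdsWithin] with u hu
        have := Real.sqrt_nonneg u
        nlinarith
      have := Filter.tendsto_atBot_add_left_of_ge' _ (0:ℝ) hev hbot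
      simpa [sub_eq_add_neg] using this
    have hP1 := tendsto_Phi_atBot.comp hIA
    have hP2 := tendsto_Phi_atBot.comp hIB
    have htot := ((hP1.const_mul ((1 / lam ^ 3 + |x| / lam ^ 2) *
        Real.exp (-lam * alphaFn x))).add
        (hP2.const_mul ((|x| / lam ^ 2 - 1 / lam ^ 3) * Real.exp (lam * gammaFn x)))).sub h3
    have hFa : Fa lam x = fun u =>
        (1 / lam ^ 3 + |x| / lam ^ 2) * Real.exp (-lam * alphaFn x) *
            Phi (lam * Real.sqrt u - |x| / Real.sqrt u)
          + (|x| / lam ^ 2 - 1 / lam ^ 3) * Real.exp (lam * gammaFn x) *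
            Phi (-(lam * Real.sqrt u) - |x| / Real.sqrt u)
          - 2 / lam ^ 2 * (u * gaussDensity u x (lam * u)) := rfl
    rw [hFa]
    simpa using htot

theorem stmt_8 (lam t s x : ℝ) (hlam : 0 < lam) (hs : 0 ≤ s) (hst : s < t) :
    ∫ r in s..t, (r - s) * gaussDensity (r - s) x (lam * (r - s)) =
      (1 / lam ^ 3) * Real.exp (-lam * alphaFn x) *
          Phi (lam * Real.sqrt (t - s) - |x| / Real.sqrt (t - s))
        - (1 / lam ^ 3) * Real.exp (lam * gammaFn x) *
          Phi (-(lam * Real.sqrt (t - s)) - |x| / Real.sqrt (t - s))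
        + (|x| / lam ^ 2) * Real.exp (-lam * alphaFn x) *
          Phi (lam * Real.sqrt (t - s) - |x| / Real.sqrt (t - s))
        + (|x| / lam ^ 2) * Real.exp (lam * gammaFn x) *
          Phi (-(lam * Real.sqrt (t - s)) - |x| / Real.sqrt (t - s))
        - (2 / lam ^ 2) * (t - s) * gaussDensity (t - s) x (lam * (t - s)) := by
  have hT : 0 < t - s := sub_pos.2 hst
  have hcomp : (∫ r in s..t, (r - s) * gaussDensity (r - s) x (lam * (r - s))) =
      ∫ u in (0:ℝ)..(t - s), u * gaussDensity u x (lam * u) := by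
    have := intervalIntegral.integral_comp_sub_right (a := s) (b := t)
      (fun u => u * gaussDensity u x (lam * u)) s
    simpa using this
  rw [hcomp]
  rw [intervalIntegral.integral_eq_sub_of_hasDerivAt_of_tendsto hT
    (fun u hu => hasDerivAt_Fa lam x hlam hu.1)
    (intervalIntegrable_main lam x (t - s) hT)
    (tendsto_Fa_zero lam x hlam)
    ((hasDerivAt_Fa lam x hlam hT).continuousAt.continuousWithinAt)]
  simp only [Fa]
  ring
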